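/- An increasing union of pseudoconvex open sets in ℂ^n is pseudoconvex. -/

import Mathlib

open Filter MeasureTheory Metric Set

noncomputable section

variable {E : Type*} [NormedAddCommGroup E] [NormedSpace ℂ E]

/-- Plurisubharmonic on a set: upper semicontinuous together with the
sub-mean-value inequality on small circles along every complex direction. -/
def PSHOn (u : E → ℝ) (Ω : Set E) : Prop :=
  UpperSemicontinuousOn u Ω ∧
    ∀ z ∈ Ω, ∀ v : E, ∃ R > (0 : ℝ), ∀ r : ℝ, 0 < r → r < R →
      (∀ t : ℂ, ‖t‖ ≤ r → z + t • v ∈ Ω) →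
      u z ≤ (1 / (2 * Real.pi)) *
        ∫ θ in (0 : ℝ)..(2 * Real.pi),
          u (z + (((r : ℂ) * Complex.exp ((θ : ℂ) * Complex.I)) • v))

open scoped Classical in
/-- The boundary extension `û` of a function on `Ω`. -/
def hatVal (u : E → ℝ) (Ω : Set E) (z : E) : ℝ :=
  if z ∈ Ω then u z else limsup u (nhdsWithin z Ω)

/-- Competitors in the definition of the plurisubharmonic measure. -/
def pshCompetitor (A Ω : Set E) (u : E → ℝ) : Prop :=
  PSHOn u Ω ∧ (∀ z ∈ Ω, u z ≤ 1) ∧ ∀ a ∈ A, hatVal u Ω a ≤ 0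

/-- The relative extremal function `h_{A,Ω}`. -/
def relExtr (A Ω : Set E) (z : E) : ℝ :=
  sSup {t : ℝ | ∃ u : E → ℝ, pshCompetitor A Ω u ∧ t = u z}

/-- The plurisubharmonic (harmonic, if `E = ℂ`) measure `ω(·, A, Ω)`:
the upper semicontinuous regularization of `h_{A,Ω}`. -/
def pshMeasure (A Ω : Set E) (z : E) : ℝ :=
  limsup (relExtr A Ω) (nhdsWithin z Ω)

/-- Pseudoconvexity: `-log dist(·, ∂Ω)` is plurisubharmonic on `Ω`. -/
def IsPseudoconvex (Ω : Set E) : Prop :=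
  IsOpen Ω ∧ (Ω = univ ∨ PSHOn (fun z => -Real.log (infDist z Ωᶜ)) Ω)

end

noncomputable section AuxLemmasForStatement11
open intervalIntegral
open scoped Topology
local notation "π" => Real.pi



lemma twoPiPos : (0:ℝ) < 2 * π := by positivity

lemma aux_integral_exp_pow {k : ℕ} (hk : k ≠ 0) :
    (∫ θ in (0:ℝ)..(2*π), Complex.exp ((θ:ℂ) * Complex.I) ^ k) = 0 := by
  have h : ∀ θ : ℝ, Complex.exp ((θ:ℂ) * Complex.I) ^ k
      = Complex.exp (((k:ℂ) * Complex.I) * θ) := by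
    intro θ
    rw [← Complex.exp_nat_mul]
    ring_nf
  simp_rw [h]
  have hc : ((k:ℂ) * Complex.I) ≠ 0 := by
    simp [Complex.I_ne_zero, hk]
  rw [integral_exp_mul_complex hc]
  have h2 : Complex.exp ((k:ℂ) * Complex.I * (2*π)) = 1 := by
    have := Complex.exp_nat_mul_two_pi_mul_I k
    rw [← this]
    congr 1
    push_cast
    ring
  simp [h2]

lemma aux_integral_pow_circle (p : ℂ) (ρ : ℝ) (m : ℕ) :
    (∫ θ in (0:ℝ)..(2*π), (p + (ρ:ℂ) * Complex.exp ((θ:ℂ) * Complex.I)) ^ m)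
      = ((2*π : ℝ):ℂ) * p ^ m := by
  have hexp : ∀ θ : ℝ, (p + (ρ:ℂ) * Complex.exp ((θ:ℂ) * Complex.I)) ^ m
      = ∑ k ∈ Finset.range (m+1),
          ((ρ:ℂ)^k * (p:ℂ)^(m-k) * (m.choose k : ℂ)) * Complex.exp ((θ:ℂ) * Complex.I) ^ k := by
    intro θ
    rw [add_comm, add_pow]
    refine Finset.sum_congr rfl fun k _ => ?_
    ring
  simp_rw [hexp]
  rw [intervalIntegral.integral_finset_sum]
  · rw [Finset.sum_eq_single 0]
    · simp [mul_comm]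
    · intro k _ hk
      rw [intervalIntegral.integral_const_mul, aux_integral_exp_pow hk, mul_zero]
    · simp
  · intro k _
    apply Continuous.intervalIntegrable
    fun_prop

lemma aux_re_monomial_mean (b p : ℂ) (ρ : ℝ) (m : ℕ) :
    (∫ θ in (0:ℝ)..(2*π), (b * (p + (ρ:ℂ) * Complex.exp ((θ:ℂ) * Complex.I)) ^ m).re)
      = (2*π) * (b * p ^ m).re := by
  have hi : IntervalIntegrable
      (fun θ : ℝ => b * (p + (ρ:ℂ) * Complex.exp ((θ:ℂ) * Complex.I)) ^ m)
      volume 0 (2*π) := by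
    apply Continuous.intervalIntegrable; fun_prop
  have := Complex.reCLM.intervalIntegral_comp_comm hi
  simp only [Complex.reCLM_apply] at this
  rw [this, intervalIntegral.integral_const_mul, aux_integral_pow_circle]
  rw [show b * (((2*π:ℝ):ℂ) * p ^ m) = ((2*π:ℝ):ℂ) * (b * p ^ m) by ring,
    Complex.re_ofReal_mul]



lemma aux_normSq_circle (p : ℂ) (ρ : ℝ) :
    (∫ θ in (0:ℝ)..(2*π), Complex.normSq (p + (ρ:ℂ) * Complex.exp ((θ:ℂ) * Complex.I)))
      = (2*π) * (Complex.normSq p + ρ^2) := by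
  have key : ∀ θ : ℝ, Complex.normSq (p + (ρ:ℂ) * Complex.exp ((θ:ℂ) * Complex.I))
      = (Complex.normSq p + ρ^2) + ((2*ρ*p.re) * Real.cos θ + (2*ρ*p.im) * Real.sin θ) := by
    intro θ
    rw [Complex.normSq_add]
    have h1 : Complex.normSq ((ρ:ℂ) * Complex.exp ((θ:ℂ) * Complex.I)) = ρ^2 := by
      rw [Complex.normSq_mul, Complex.normSq_eq_norm_sq, Complex.normSq_eq_norm_sq,
        Complex.norm_exp_ofReal_mul_I, Complex.norm_real]
      simp [sq_abs]
    have h2 : (p * (starRingEnd ℂ) ((ρ:ℂ) * Complex.exp ((θ:ℂ) * Complex.I))).re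
        = ρ * (p.re * Real.cos θ + p.im * Real.sin θ) := by
      rw [Complex.exp_mul_I]
      simp [Complex.mul_re, Complex.mul_im, Complex.cos_ofReal_re, Complex.sin_ofReal_re]
      ring
    rw [h1, h2]
    ring
  simp_rw [key]
  have e1 : (∫ θ in (0:ℝ)..(2*π), ((2*ρ*p.re) * Real.cos θ + (2*ρ*p.im) * Real.sin θ)) = 0 := by
    rw [intervalIntegral.integral_add (by apply Continuous.intervalIntegrable; fun_prop)
        (by apply Continuous.intervalIntegrable; fun_prop),
      intervalIntegral.integral_const_mul, intervalIntegral.integral_const_mul,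
      integral_cos, integral_sin]
    simp
  rw [intervalIntegral.integral_add (intervalIntegrable_const)
      (by apply Continuous.intervalIntegrable; fun_prop), e1,
    intervalIntegral.integral_const]
  simp [smul_eq_mul]

/-- Maximum principle for continuous functions with the local sub-mean property. -/
lemma aux_max_principle {g : ℂ → ℝ} {U : Set ℂ} (hg : ContinuousOn g U)
    {r : ℝ} (hr : 0 < r) (hD : closedBall (0:ℂ) r ⊆ U)
    (hsm : ∀ p ∈ U, ∃ R > (0:ℝ), ∀ ρ : ℝ, 0 < ρ → ρ < R → closedBall p ρ ⊆ U →
      g p ≤ (1/(2*π)) * ∫ θ in (0:ℝ)..(2*π), g (p + (ρ:ℂ) * Complex.exp ((θ:ℂ) * Complex.I)))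
    {M : ℝ} (hM : ∀ x ∈ sphere (0:ℂ) r, g x ≤ M) :
    g 0 ≤ M := by
  have h2π := twoPiPos
  by_contra hcon
  push_neg at hcon
  set δ : ℝ := (g 0 - M) / (2 * r^2) with hδdef
  have hδ : 0 < δ := by
    apply div_pos (by linarith) (by positivity)
  set gε : ℂ → ℝ := fun x => g x + δ * Complex.normSq x with hgε
  have hgεc : ContinuousOn gε (closedBall (0:ℂ) r) := by
    apply ContinuousOn.add (hg.mono hD)
    exact (Complex.continuous_normSq.continuousOn).const_smul δ
  obtain ⟨p, hpK, hpmax⟩ := (isCompact_closedBall (0:ℂ) r).exists_isMaxOn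
    ⟨0, by simp [hr.le]⟩ hgεc
  have hpr : ‖p‖ ≤ r := by
    simpa [Complex.dist_eq] using mem_closedBall.1 hpK
  rcases lt_or_eq_of_le hpr with hlt | heq
  · -- interior max: contradiction
    obtain ⟨R, hR, hsub⟩ := hsm p (hD hpK)
    set ρ : ℝ := min R (r - ‖p‖) / 2 with hρdef
    have hρpos : 0 < ρ := by
      apply div_pos _ two_pos
      exact lt_min hR (by linarith)
    have hρR : ρ < R := by
      have := min_le_left R (r - ‖p‖)
      rw [hρdef]; linarith
    have hρr : ρ + ‖p‖ ≤ r := by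
      have := min_le_right R (r - ‖p‖)
      rw [hρdef]; linarith
    have hball : closedBall p ρ ⊆ closedBall (0:ℂ) r := by
      apply closedBall_subset_closedBall'
      simpa [Complex.dist_eq] using hρr
    have hmean := hsub ρ hρpos hρR (hball.trans hD)
    have hcirc : ∀ θ : ℝ, p + (ρ:ℂ) * Complex.exp ((θ:ℂ) * Complex.I) ∈ closedBall (0:ℂ) r := by
      intro θ
      apply hball
      simp only [mem_closedBall, Complex.dist_eq, add_sub_cancel_left]
      rw [norm_mul, Complex.norm_exp_ofReal_mul_I, Complex.norm_real, mul_one,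
        Real.norm_eq_abs, abs_of_pos hρpos]
    -- integrability
    have hgint : IntervalIntegrable
        (fun θ : ℝ => g (p + (ρ:ℂ) * Complex.exp ((θ:ℂ) * Complex.I))) volume 0 (2*π) := by
      apply Continuous.intervalIntegrable
      apply (hg.mono hD).comp_continuous (by fun_prop) (fun θ => hcirc θ)
    have hnint : IntervalIntegrable
        (fun θ : ℝ => δ * Complex.normSq (p + (ρ:ℂ) * Complex.exp ((θ:ℂ) * Complex.I)))
        volume 0 (2*π) := by
      exact (continuous_const.mul (Complex.continuous_normSq.comp
        (by fun_prop))).intervalIntegrable _ _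
    -- mean of gε over circle
    have hgεmean : (∫ θ in (0:ℝ)..(2*π), gε (p + (ρ:ℂ) * Complex.exp ((θ:ℂ) * Complex.I)))
        = (∫ θ in (0:ℝ)..(2*π), g (p + (ρ:ℂ) * Complex.exp ((θ:ℂ) * Complex.I)))
          + δ * ((2*π) * (Complex.normSq p + ρ^2)) := by
      rw [← aux_normSq_circle p ρ, ← intervalIntegral.integral_const_mul]
      exact intervalIntegral.integral_add hgint hnint
    -- gε ≤ gε p on the circle, so the mean of gε is ≤ gε p
    have hle : (∫ θ in (0:ℝ)..(2*π), gε (p + (ρ:ℂ) * Complex.exp ((θ:ℂ) * Complex.I)))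
        ≤ (2*π) * gε p := by
      have h := intervalIntegral.integral_mono_on (f := fun θ : ℝ =>
          gε (p + (ρ:ℂ) * Complex.exp ((θ:ℂ) * Complex.I)))
          (g := fun _ : ℝ => gε p) h2π.le
          (hgint.add hnint) (intervalIntegrable_const)
          (fun θ _ => hpmax (hcirc θ))
      rw [intervalIntegral.integral_const, sub_zero, smul_eq_mul] at h
      exact h
    -- but also gε p < mean of gε
    have hgp : g p ≤ (1/(2*π)) *
        (∫ θ in (0:ℝ)..(2*π), g (p + (ρ:ℂ) * Complex.exp ((θ:ℂ) * Complex.I))) := hmean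
    have hfinal : gε p + δ * ρ^2 ≤ (1/(2*π)) *
        (∫ θ in (0:ℝ)..(2*π), gε (p + (ρ:ℂ) * Complex.exp ((θ:ℂ) * Complex.I))) := by
      rw [hgεmean]
      have : (1/(2*π)) * ((∫ θ in (0:ℝ)..(2*π), g (p + (ρ:ℂ) * Complex.exp ((θ:ℂ) * Complex.I)))
          + δ * ((2*π) * (Complex.normSq p + ρ^2)))
          = (1/(2*π)) * (∫ θ in (0:ℝ)..(2*π), g (p + (ρ:ℂ) * Complex.exp ((θ:ℂ) * Complex.I)))
            + δ * (Complex.normSq p + ρ^2) := by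
        generalize (∫ θ in (0:ℝ)..(2*π), g (p + (ρ:ℂ) * Complex.exp ((θ:ℂ) * Complex.I))) = A
        field_simp
      rw [this]
      have : gε p + δ * ρ^2 = g p + δ * (Complex.normSq p + ρ^2) := by
        simp only [hgε]; ring
      rw [this]
      linarith
    have : (1/(2*π)) * (∫ θ in (0:ℝ)..(2*π), gε (p + (ρ:ℂ) * Complex.exp ((θ:ℂ) * Complex.I)))
        ≤ gε p := by
      rw [div_mul_eq_mul_div, one_mul, div_le_iff₀ h2π]
      linarith [hle]
    linarith [mul_pos hδ (pow_pos hρpos 2)]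
  · -- max on the sphere
    have hps : p ∈ sphere (0:ℂ) r := by
      simp [Complex.dist_eq, heq]
    have h0 : gε 0 ≤ gε p := hpmax (by simp [hr.le])
    have : g 0 ≤ g p + δ * r^2 := by
      have hnp : Complex.normSq p = r^2 := by
        rw [Complex.normSq_eq_norm_sq, heq]
      simpa [hgε, hnp] using h0
    have hfin : g 0 ≤ M + δ * r^2 := by linarith [hM p hps]
    have hkey : δ * r^2 = (g 0 - M)/2 := by
      rw [hδdef]; field_simp
    linarith


lemma aux_fourier_val (n : ℤ) (θ : ℝ) :
    haveI : Fact ((0:ℝ) < 2*π) := ⟨twoPiPos⟩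
    (fourier (T := 2*π) n (θ : AddCircle (2*π)) : ℂ)
      = Complex.exp ((n:ℂ) * θ * Complex.I) := by
  haveI : Fact ((0:ℝ) < 2*π) := ⟨twoPiPos⟩
  rw [fourier_coe_apply]
  congr 1
  have hπ : (π:ℂ) ≠ 0 := Complex.ofReal_ne_zero.mpr Real.pi_ne_zero
  push_cast
  field_simp

lemma aux_term (cn : ℂ) (n : ℤ) (θ : ℝ) :
    ((if (0:ℤ) ≤ n then cn else (starRingEnd ℂ) cn)
        * (Complex.exp ((θ:ℂ) * Complex.I)) ^ (n.natAbs)).re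
      = (cn * Complex.exp ((n:ℂ) * θ * Complex.I)).re := by
  split_ifs with h
  · have : (Complex.exp ((θ:ℂ) * Complex.I)) ^ (n.natAbs)
        = Complex.exp ((n:ℂ) * θ * Complex.I) := by
      rw [← Complex.exp_nat_mul]
      have h1 : (n.natAbs : ℤ) = n := Int.natAbs_of_nonneg h
      have h2 : ((n.natAbs : ℂ)) = (n : ℂ) := by
        rw [← Int.cast_natCast (R := ℂ), h1]
      rw [← mul_assoc, h2]
    rw [this]
  · push_neg at h
    have hvn : ((n.natAbs : ℂ)) = -(n : ℂ) := by
      have h1 : (n.natAbs : ℤ) = -n := by omega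
      rw [← Int.cast_natCast (R := ℂ), h1, Int.cast_neg]
    have hconj : (Complex.exp ((θ:ℂ) * Complex.I)) ^ (n.natAbs)
        = (starRingEnd ℂ) (Complex.exp ((n:ℂ) * θ * Complex.I)) := by
      rw [← Complex.exp_conj, ← Complex.exp_nat_mul, ← mul_assoc, hvn]
      congr 1
      have hc : (starRingEnd ℂ) ((n:ℂ) * (θ:ℂ) * Complex.I)
          = (n:ℂ) * (θ:ℂ) * (-Complex.I) := by
        simp [map_mul, Complex.conj_I, Complex.conj_ofReal]
      rw [hc]
      ring
    rw [hconj, ← map_mul, Complex.conj_re]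

lemma aux_exact_mean {r : ℝ} (hr : 0 < r) (s : Finset ℤ) (a : ℤ → ℂ) (p : ℂ) (ρ : ℝ) :
    (∫ θ in (0:ℝ)..(2*π), ∑ n ∈ s,
        (a n * ((p + (ρ:ℂ) * Complex.exp ((θ:ℂ) * Complex.I))/(r:ℂ))^(n.natAbs)).re)
      = (2*π) * ∑ n ∈ s, (a n * ((p:ℂ)/(r:ℂ))^(n.natAbs)).re := by
  have hrc : ((r:ℝ):ℂ) ≠ 0 := by exact_mod_cast hr.ne'
  rw [intervalIntegral.integral_finset_sum]
  · rw [Finset.mul_sum]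
    refine Finset.sum_congr rfl fun n _ => ?_
    have key : ∀ t : ℂ, a n * (t/(r:ℂ))^(n.natAbs)
        = (a n / (r:ℂ)^(n.natAbs)) * t^(n.natAbs) := by
      intro t; rw [div_pow]; ring
    simp_rw [key]
    rw [aux_re_monomial_mean]
  · intro n _
    apply Continuous.intervalIntegrable
    apply Complex.continuous_re.comp
    fun_prop



/-- A continuous function with the local sub-mean property satisfies the sub-mean
inequality over every circle whose closed disk is contained in the domain. -/
lemma aux_submean_disk {w : ℂ → ℝ} {U : Set ℂ} (hw : ContinuousOn w U)
    (hsm : ∀ p ∈ U, ∃ R > (0:ℝ), ∀ ρ : ℝ, 0 < ρ → ρ < R → closedBall p ρ ⊆ U →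
      w p ≤ (1/(2*π)) * ∫ θ in (0:ℝ)..(2*π), w (p + (ρ:ℂ) * Complex.exp ((θ:ℂ) * Complex.I)))
    {r : ℝ} (hr : 0 < r) (hD : closedBall (0:ℂ) r ⊆ U) :
    w 0 ≤ (1/(2*π)) * ∫ θ in (0:ℝ)..(2*π), w ((r:ℂ) * Complex.exp ((θ:ℂ) * Complex.I)) := by
  have h2π := twoPiPos
  haveI : Fact ((0:ℝ) < 2*π) := ⟨h2π⟩
  set I0 : ℝ := (1/(2*π)) * ∫ θ in (0:ℝ)..(2*π), w ((r:ℂ) * Complex.exp ((θ:ℂ) * Complex.I))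
    with hI0
  have hrc : ((r:ℝ):ℂ) ≠ 0 := by exact_mod_cast hr.ne'
  have hcircle : ∀ θ : ℝ, (r:ℂ) * Complex.exp ((θ:ℂ)*Complex.I) ∈ closedBall (0:ℂ) r := by
    intro θ
    simp only [mem_closedBall, Complex.dist_eq, sub_zero]
    rw [norm_mul, Complex.norm_exp_ofReal_mul_I, Complex.norm_real, mul_one, Real.norm_eq_abs, abs_of_pos hr]
  have hexpper : ∀ θ : ℝ, Complex.exp ((((θ + 2*π):ℝ):ℂ) * Complex.I)
      = Complex.exp ((θ:ℂ)*Complex.I) := by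
    intro θ
    push_cast
    rw [add_mul, Complex.exp_add, Complex.exp_two_pi_mul_I, mul_one]
  have hf : Continuous (fun θ : ℝ => w ((r:ℂ) * Complex.exp ((θ:ℂ) * Complex.I))) :=
    hw.comp_continuous (by fun_prop) (fun θ => hD (hcircle θ))
  have main : ∀ ε : ℝ, 0 < ε → w 0 ≤ I0 + 2*ε := by
    intro ε hε
    set fC : ℝ → ℂ := fun θ => ((w ((r:ℂ) * Complex.exp ((θ:ℂ) * Complex.I)) : ℝ) : ℂ)
      with hfCdef
    have hfCc : Continuous fC := by
      simp only [hfCdef]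
      exact Complex.continuous_ofReal.comp hf
    have hper : fC 0 = fC (2*π) := by
      simp only [hfCdef]
      congr 2
      rw [show ((2*π:ℝ):ℂ) = 2*(π:ℂ) by push_cast; ring, Complex.exp_two_pi_mul_I]
      norm_num
    set F : C(AddCircle (2*π), ℂ) := ⟨AddCircle.liftIco (2*π) 0 fC,
      AddCircle.liftIco_zero_continuous hper hfCc.continuousOn⟩ with hFdef
    have hFval : ∀ θ : ℝ, θ ∈ Ico (0:ℝ) (2*π) → F ↑θ = fC θ := by
      intro θ hθ
      exact AddCircle.liftIco_zero_coe_apply (f := fC) hθ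
    have hFmem : F ∈
        closure ((Submodule.span ℂ (range (@fourier (2*π)))) : Set C(AddCircle (2*π), ℂ)) := by
      rw [← Submodule.topologicalClosure_coe, span_fourier_closure_eq_top]
      trivial
    obtain ⟨G, hGspan, hGdist⟩ := Metric.mem_closure_iff.1 hFmem ε hε
    obtain ⟨c, hcG⟩ := Finsupp.mem_span_range_iff_exists_finsupp.1 hGspan
    have hGval : ∀ θ : ℝ, G ↑θ = ∑ n ∈ c.support, c n * Complex.exp ((n:ℂ) * θ * Complex.I) := by
      intro θ
      rw [← hcG, Finsupp.sum, ContinuousMap.sum_apply]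
      refine Finset.sum_congr rfl fun n _ => ?_
      rw [ContinuousMap.smul_apply, aux_fourier_val n θ, smul_eq_mul]
    set a : ℤ → ℂ := fun n => if (0:ℤ) ≤ n then c n else (starRingEnd ℂ) (c n) with hadef
    set h : ℂ → ℝ := fun t => ∑ n ∈ c.support, (a n * (t/(r:ℂ))^(n.natAbs)).re with hhdef
    have hhc : Continuous h := by
      simp only [hhdef]
      apply continuous_finset_sum
      intro n _
      apply Complex.continuous_re.comp
      fun_prop
    have hcircval : ∀ θ : ℝ, h ((r:ℂ) * Complex.exp ((θ:ℂ)*Complex.I)) = (G ↑θ).re := by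
      intro θ
      rw [hGval, Complex.re_sum]
      simp only [hhdef]
      refine Finset.sum_congr rfl fun n _ => ?_
      rw [show ((r:ℂ) * Complex.exp ((θ:ℂ)*Complex.I))/(r:ℂ)
          = Complex.exp ((θ:ℂ)*Complex.I) by field_simp]
      exact aux_term (c n) n θ
    have hbound : ∀ θ : ℝ, θ ∈ Ico (0:ℝ) (2*π) →
        |w ((r:ℂ) * Complex.exp ((θ:ℂ)*Complex.I))
          - h ((r:ℂ) * Complex.exp ((θ:ℂ)*Complex.I))| ≤ ε := by
      intro θ hθ
      rw [hcircval]
      have h1 : (F (θ : AddCircle (2*π))).re = w ((r:ℂ) * Complex.exp ((θ:ℂ)*Complex.I)) := by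
        rw [hFval θ hθ]
        simp only [hfCdef, Complex.ofReal_re]
      rw [← h1]
      calc |(F ↑θ).re - (G ↑θ).re| = |(F ↑θ - G ↑θ).re| := by rw [Complex.sub_re]
        _ ≤ ‖F ↑θ - G ↑θ‖ := Complex.abs_re_le_norm _
        _ = dist (F ↑θ) (G ↑θ) := (Complex.dist_eq _ _).symm
        _ ≤ dist F G := ContinuousMap.dist_apply_le_dist _
        _ ≤ ε := hGdist.le
    have hboundIcc : ∀ θ : ℝ, θ ∈ Icc (0:ℝ) (2*π) →
        |w ((r:ℂ) * Complex.exp ((θ:ℂ)*Complex.I))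
          - h ((r:ℂ) * Complex.exp ((θ:ℂ)*Complex.I))| ≤ ε := by
      intro θ hθ
      rcases eq_or_lt_of_le hθ.2 with heq | hlt
      · have h0 := hexpper 0
        rw [zero_add] at h0
        subst heq
        rw [h0]
        exact hbound 0 ⟨le_refl 0, h2π⟩
      · exact hbound θ ⟨hθ.1, hlt⟩
    have hsphere : ∀ x ∈ sphere (0:ℂ) r, w x - h x ≤ ε := by
      intro x hx
      have hax : ‖x‖ = r := by
        simpa [Complex.dist_eq] using hx
      set ψ : ℝ := if 0 ≤ Complex.arg x then Complex.arg x else Complex.arg x + 2*π with hψ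
      have hψmem : ψ ∈ Ico (0:ℝ) (2*π) := by
        have h1 := Complex.arg_le_pi x
        have h2 := Complex.neg_pi_lt_arg x
        have hπ2 : π < 2*π := by linarith [Real.pi_pos]
        rw [hψ]
        split_ifs with hcase
        · exact ⟨hcase, by linarith⟩
        · push_neg at hcase
          exact ⟨by linarith, by linarith⟩
      have hxeq : x = (r:ℂ) * Complex.exp ((ψ:ℂ) * Complex.I) := by
        rw [hψ]
        split_ifs with hcase
        · conv_lhs => rw [← Complex.norm_mul_exp_arg_mul_I x]
          rw [hax]
        · conv_lhs => rw [← Complex.norm_mul_exp_arg_mul_I x]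
          rw [hax, ← hexpper (Complex.arg x)]
      have := hbound ψ hψmem
      rw [← hxeq] at this
      linarith [le_abs_self (w x - h x), this]
    have hmean : ∀ (p : ℂ) (ρ : ℝ),
        (∫ θ in (0:ℝ)..(2*π), h (p + (ρ:ℂ)*Complex.exp ((θ:ℂ)*Complex.I))) = (2*π) * h p := by
      intro p ρ
      simp only [hhdef]
      exact aux_exact_mean hr c.support a p ρ
    have hsm' : ∀ p ∈ U, ∃ R > (0:ℝ), ∀ ρ : ℝ, 0 < ρ → ρ < R → closedBall p ρ ⊆ U →
        (w p - h p) ≤ (1/(2*π)) * ∫ θ in (0:ℝ)..(2*π),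
          (w (p + (ρ:ℂ)*Complex.exp ((θ:ℂ)*Complex.I))
            - h (p + (ρ:ℂ)*Complex.exp ((θ:ℂ)*Complex.I))) := by
      intro p hp
      obtain ⟨R, hR, hsub⟩ := hsm p hp
      refine ⟨R, hR, fun ρ hρ hρR hball => ?_⟩
      have h1 := hsub ρ hρ hρR hball
      have hcirc2 : ∀ θ : ℝ, p + (ρ:ℂ)*Complex.exp ((θ:ℂ)*Complex.I) ∈ U := by
        intro θ
        apply hball
        simp only [mem_closedBall, Complex.dist_eq, add_sub_cancel_left]
        rw [norm_mul, Complex.norm_exp_ofReal_mul_I, Complex.norm_real, mul_one, Real.norm_eq_abs, abs_of_pos hρ]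
      have hwint : IntervalIntegrable
          (fun θ : ℝ => w (p + (ρ:ℂ)*Complex.exp ((θ:ℂ)*Complex.I))) volume 0 (2*π) :=
        (hw.comp_continuous (by fun_prop) hcirc2).intervalIntegrable _ _
      have hhint : IntervalIntegrable
          (fun θ : ℝ => h (p + (ρ:ℂ)*Complex.exp ((θ:ℂ)*Complex.I))) volume 0 (2*π) :=
        (hhc.comp (by fun_prop)).intervalIntegrable _ _
      rw [intervalIntegral.integral_sub hwint hhint, hmean]
      have : (1/(2*π)) * ((∫ θ in (0:ℝ)..(2*π), w (p + (ρ:ℂ)*Complex.exp ((θ:ℂ)*Complex.I)))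
          - (2*π) * h p)
          = (1/(2*π)) * (∫ θ in (0:ℝ)..(2*π), w (p + (ρ:ℂ)*Complex.exp ((θ:ℂ)*Complex.I)))
            - h p := by
        generalize (∫ θ in (0:ℝ)..(2*π), w (p + (ρ:ℂ)*Complex.exp ((θ:ℂ)*Complex.I))) = A
        field_simp
      rw [this]
      linarith
    have hMP : w 0 - h 0 ≤ ε :=
      aux_max_principle (g := fun t => w t - h t) (hw.sub hhc.continuousOn) hr hD hsm' hsphere
    have hmean0 := hmean 0 r
    have hintEq : (∫ θ in (0:ℝ)..(2*π), h ((r:ℂ)*Complex.exp ((θ:ℂ)*Complex.I)))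
        = (2*π) * h 0 := by
      rw [← hmean0]
      congr 1
      ext θ
      rw [zero_add]
    have hcompare : (∫ θ in (0:ℝ)..(2*π), h ((r:ℂ)*Complex.exp ((θ:ℂ)*Complex.I)))
        ≤ (∫ θ in (0:ℝ)..(2*π), (w ((r:ℂ)*Complex.exp ((θ:ℂ)*Complex.I)) + ε)) := by
      have hint1 : IntervalIntegrable
          (fun θ : ℝ => h ((r:ℂ)*Complex.exp ((θ:ℂ)*Complex.I))) volume 0 (2*π) :=
        (hhc.comp (by fun_prop)).intervalIntegrable _ _
      have hint2 : IntervalIntegrable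
          (fun θ : ℝ => w ((r:ℂ)*Complex.exp ((θ:ℂ)*Complex.I)) + ε) volume 0 (2*π) :=
        (hf.add continuous_const).intervalIntegrable _ _
      apply intervalIntegral.integral_mono_on h2π.le hint1 hint2
      intro θ hθ
      have := abs_le.1 (hboundIcc θ hθ)
      linarith [this.1]
    have hwε : (∫ θ in (0:ℝ)..(2*π), (w ((r:ℂ)*Complex.exp ((θ:ℂ)*Complex.I)) + ε))
        = (∫ θ in (0:ℝ)..(2*π), w ((r:ℂ)*Complex.exp ((θ:ℂ)*Complex.I))) + (2*π)*ε := by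
      rw [intervalIntegral.integral_add (hf.intervalIntegrable _ _) intervalIntegrable_const,
        intervalIntegral.integral_const, sub_zero, smul_eq_mul]
    have hh0le : h 0 ≤ I0 + ε := by
      rw [hwε] at hcompare
      rw [hintEq] at hcompare
      rw [hI0]
      have := mul_le_mul_of_nonneg_left hcompare
        (le_of_lt (by positivity : (0:ℝ) < 1/(2*π)))
      have heq2 : (1/(2*π)) * ((2*π) * h 0) = h 0 := by field_simp
      have heq3 : (1/(2*π)) * ((∫ θ in (0:ℝ)..(2*π), w ((r:ℂ)*Complex.exp ((θ:ℂ)*Complex.I)))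
          + (2*π)*ε)
          = (1/(2*π)) * (∫ θ in (0:ℝ)..(2*π), w ((r:ℂ)*Complex.exp ((θ:ℂ)*Complex.I))) + ε := by
        generalize (∫ θ in (0:ℝ)..(2*π), w ((r:ℂ)*Complex.exp ((θ:ℂ)*Complex.I))) = A
        field_simp
      rw [heq2, heq3] at this
      exact this
    linarith
  by_contra hcon
  push_neg at hcon
  have := main ((w 0 - I0)/4) (by linarith)
  linarith



lemma aux_dist_tendsto {X : Type*} [MetricSpace X] [ProperSpace X]
    (S : ℕ → Set X) (hanti : Antitone S) (hclosed : ∀ k, IsClosed (S k))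
    (hne : ∀ k, (S k).Nonempty) (hione : (⋂ k, S k).Nonempty) (x : X) :
    Tendsto (fun k => infDist x (S k)) atTop (𝓝 (infDist x (⋂ k, S k))) := by
  have hmono : Monotone (fun k => infDist x (S k)) := fun i j hij =>
    infDist_le_infDist_of_subset (hanti hij) (hne j)
  have hbdd : ∀ k, infDist x (S k) ≤ infDist x (⋂ k, S k) := fun k =>
    infDist_le_infDist_of_subset (iInter_subset S k) hione
  have hBdd : BddAbove (range fun k => infDist x (S k)) := by
    refine ⟨infDist x (⋂ k, S k), ?_⟩
    rintro _ ⟨k, rfl⟩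
    exact hbdd k
  have htend := tendsto_atTop_ciSup hmono hBdd
  have hLle : (⨆ k, infDist x (S k)) ≤ infDist x (⋂ k, S k) := ciSup_le hbdd
  suffices hkey : infDist x (⋂ k, S k) ≤ ⨆ k, infDist x (S k) by
    have : (⨆ k, infDist x (S k)) = infDist x (⋂ k, S k) := le_antisymm hLle hkey
    rwa [this] at htend
  -- choose closest points
  have hy : ∀ k, ∃ y ∈ S k, infDist x (S k) = dist x y := fun k =>
    (hclosed k).exists_infDist_eq_dist (hne k) x
  choose y hyS hyd using hy
  have hyball : ∀ k, y k ∈ closedBall x (⨆ k, infDist x (S k)) := by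
    intro k
    rw [mem_closedBall, dist_comm, ← hyd k]
    exact le_ciSup hBdd k
  obtain ⟨p, hp, φ, hφ, hpconv⟩ :=
    (isCompact_closedBall x _).tendsto_subseq hyball
  have hpmem : p ∈ ⋂ k, S k := by
    rw [mem_iInter]
    intro m
    apply (hclosed m).mem_of_tendsto hpconv
    filter_upwards [eventually_ge_atTop m] with k hk
    exact hanti (le_trans hk (hφ.le_apply)) (hyS (φ k))
  have h1 : Tendsto (fun k => dist x (y (φ k))) atTop (𝓝 (dist x p)) :=
    (tendsto_const_nhds.dist hpconv)
  have h2 : Tendsto (fun k => dist x (y (φ k))) atTop (𝓝 (⨆ k, infDist x (S k))) := by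
    have := htend.comp hφ.tendsto_atTop
    simpa [Function.comp_def, hyd] using this
  have : dist x p = ⨆ k, infDist x (S k) := tendsto_nhds_unique h1 h2
  calc infDist x (⋂ k, S k) ≤ dist x p := infDist_le_dist_of_mem hpmem
    _ = _ := this


set_option maxHeartbeats 1000000 in
/-- an increasing union of pseudoconvex open sets is pseudoconvex. -/
theorem increasing_union_pseudoconvex (n : ℕ)
    (Ω : ℕ → Set (EuclideanSpace ℂ (Fin n)))
    (hmono : Monotone Ω) (hpc : ∀ j, IsPseudoconvex (Ω j)) :
    IsPseudoconvex (⋃ j, Ω j) := by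
  have h2π := twoPiPos
  refine ⟨isOpen_iUnion fun j => (hpc j).1, ?_⟩
  by_cases hU : (⋃ j, Ω j) = univ
  · exact Or.inl hU
  right
  have hopen : IsOpen (⋃ j, Ω j) := isOpen_iUnion fun j => (hpc j).1
  have hne : ((⋃ j, Ω j)ᶜ).Nonempty := nonempty_compl.mpr hU
  have hjne : ∀ j, ((Ω j)ᶜ).Nonempty := fun j =>
    hne.mono (compl_subset_compl.mpr (subset_iUnion Ω j))
  have hjpsh : ∀ j, PSHOn (fun z => -Real.log (infDist z (Ω j)ᶜ)) (Ω j) := by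
    intro j
    rcases (hpc j).2 with h | h
    · refine absurd (eq_univ_of_univ_subset ?_) hU
      rw [← h]
      exact subset_iUnion Ω j
    · exact h
  have hucont : ∀ V : Set (EuclideanSpace ℂ (Fin n)), IsOpen V → (Vᶜ).Nonempty →
      ContinuousOn (fun x => -Real.log (infDist x Vᶜ)) V := by
    intro V hV hVne x hx
    apply ContinuousAt.continuousWithinAt
    have hpos : 0 < infDist x Vᶜ := by
      rw [← hV.isClosed_compl.notMem_iff_infDist_pos hVne]
      simpa using hx
    have hc1 : ContinuousAt (fun y : EuclideanSpace ℂ (Fin n) => infDist y Vᶜ) x :=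
      (continuous_infDist_pt Vᶜ).continuousAt
    have hc2 : ContinuousAt (fun y : EuclideanSpace ℂ (Fin n) => Real.log (infDist y Vᶜ)) x :=
      ContinuousAt.comp (f := fun y : EuclideanSpace ℂ (Fin n) => infDist y Vᶜ)
        (Real.continuousAt_log hpos.ne') hc1
    exact hc2.neg
  have hpos' : ∀ (V : Set (EuclideanSpace ℂ (Fin n))), IsOpen V → (Vᶜ).Nonempty →
      ∀ x ∈ V, 0 < infDist x Vᶜ := by
    intro V hV hVne x hx
    rw [← hV.isClosed_compl.notMem_iff_infDist_pos hVne]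
    simpa using hx
  constructor
  · exact (hucont _ hopen hne).upperSemicontinuousOn
  intro z hz v
  refine ⟨1, one_pos, ?_⟩
  intro r hr hr1 hdisk
  have hmapc : Continuous (fun t : ℂ => z + t • v) := by fun_prop
  set D : Set (EuclideanSpace ℂ (Fin n)) := (fun t : ℂ => z + t • v) '' (closedBall 0 r)
    with hDdef
  have hDcpt : IsCompact D := (isCompact_closedBall 0 r).image hmapc
  have hDsub : D ⊆ ⋃ j, Ω j := by
    rintro _ ⟨t, ht, rfl⟩
    exact hdisk t (by simpa [Complex.dist_eq] using ht)
  obtain ⟨s, hs⟩ := hDcpt.elim_finite_subcover Ω (fun j => (hpc j).1) hDsub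
  set j0 : ℕ := s.sup id with hj0
  have hDj0 : D ⊆ Ω j0 := by
    intro x hx
    obtain ⟨i, hi, hxi⟩ := mem_iUnion₂.1 (hs hx)
    exact hmono (Finset.le_sup (f := id) hi) hxi
  have hzD : z ∈ D := ⟨0, by simp [hr.le], by simp⟩
  have hcircD : ∀ θ : ℝ, z + (((r:ℂ)) * Complex.exp ((θ:ℂ) * Complex.I)) • v ∈ D := by
    intro θ
    refine ⟨(r:ℂ) * Complex.exp ((θ:ℂ) * Complex.I), ?_, rfl⟩
    simp only [mem_closedBall, Complex.dist_eq, sub_zero]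
    rw [norm_mul, Complex.norm_exp_ofReal_mul_I, Complex.norm_real, mul_one, Real.norm_eq_abs, abs_of_pos hr]
  -- Step A : sub-mean inequality for each approximating domain
  have stepA : ∀ k : ℕ,
      -Real.log (infDist z (Ω (j0+k))ᶜ) ≤ (1/(2*π)) *
        ∫ θ in (0:ℝ)..(2*π),
          -Real.log (infDist (z + (((r:ℂ)) * Complex.exp ((θ:ℂ) * Complex.I)) • v)
            (Ω (j0+k))ᶜ) := by
    intro k
    have hjk : D ⊆ Ω (j0+k) := hDj0.trans (hmono (Nat.le_add_right _ _))
    have hw : ContinuousOn (fun t : ℂ => -Real.log (infDist (z + t • v) (Ω (j0+k))ᶜ))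
        ((fun t : ℂ => z + t • v) ⁻¹' (Ω (j0+k))) :=
      (hucont _ (hpc _).1 (hjne _)).comp hmapc.continuousOn (fun t ht => ht)
    have hrwpt : ∀ (p t : ℂ), z + p • v + t • v = z + (p + t) • v := by
      intro p t
      rw [add_smul, add_assoc]
    have hsmU : ∀ p ∈ ((fun t : ℂ => z + t • v) ⁻¹' (Ω (j0+k))),
        ∃ R > (0:ℝ), ∀ ρ : ℝ, 0 < ρ → ρ < R →
          closedBall p ρ ⊆ ((fun t : ℂ => z + t • v) ⁻¹' (Ω (j0+k))) →
        -Real.log (infDist (z + p • v) (Ω (j0+k))ᶜ) ≤ (1/(2*π)) *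
          ∫ θ in (0:ℝ)..(2*π),
            -Real.log (infDist (z + (p + (ρ:ℂ) * Complex.exp ((θ:ℂ) * Complex.I)) • v)
              (Ω (j0+k))ᶜ) := by
      intro p hp
      obtain ⟨R, hR, H⟩ := (hjpsh (j0+k)).2 (z + p • v) hp v
      refine ⟨R, hR, fun ρ hρ hρR hball => ?_⟩
      have hcond : ∀ t : ℂ, ‖t‖ ≤ ρ → (z + p • v) + t • v ∈ Ω (j0+k) := by
        intro t ht
        rw [hrwpt p t]
        apply hball
        simp only [mem_closedBall, Complex.dist_eq, add_sub_cancel_left]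
        exact ht
      have h2 := H ρ hρ hρR hcond
      simp only [hrwpt] at h2
      exact h2
    have hdisk2 : closedBall (0:ℂ) r ⊆ ((fun t : ℂ => z + t • v) ⁻¹' (Ω (j0+k))) := by
      intro t ht
      exact hjk ⟨t, ht, rfl⟩
    have := aux_submean_disk hw hsmU hr hdisk2
    simp only [zero_smul, add_zero] at this
    exact this
  -- Step B : pointwise convergence
  have hiInter : (⋂ k, (Ω (j0+k))ᶜ) = (⋃ j, Ω j)ᶜ := by
    apply Subset.antisymm
    · intro x hx
      simp only [mem_iInter, mem_compl_iff] at hx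
      simp only [mem_compl_iff, mem_iUnion]
      rintro ⟨j, hj⟩
      exact hx j (hmono (Nat.le_add_left j j0) hj)
    · intro x hx
      simp only [mem_iInter]
      intro k
      exact compl_subset_compl.mpr (subset_iUnion Ω (j0+k)) hx
  have hconv : ∀ x ∈ (⋃ j, Ω j),
      Tendsto (fun k => -Real.log (infDist x (Ω (j0+k))ᶜ)) atTop
        (𝓝 (-Real.log (infDist x (⋃ j, Ω j)ᶜ))) := by
    intro x hx
    have htd : Tendsto (fun k => infDist x (Ω (j0+k))ᶜ) atTop
        (𝓝 (infDist x (⋃ j, Ω j)ᶜ)) := by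
      have := aux_dist_tendsto (fun k => (Ω (j0+k))ᶜ)
        (fun i j hij => compl_subset_compl.mpr (hmono (by omega)))
        (fun k => (hpc _).1.isClosed_compl) (fun k => hjne _)
        (by rw [hiInter]; exact hne) x
      rwa [hiInter] at this
    have hpos := hpos' _ hopen hne x hx
    exact (((Real.continuousAt_log hpos.ne').tendsto).comp htd).neg
  -- Step C : convergence of the circle means
  have hcirccont : ∀ k : ℕ, Continuous (fun θ : ℝ =>
      -Real.log (infDist (z + (((r:ℂ)) * Complex.exp ((θ:ℂ) * Complex.I)) • v)
        (Ω (j0+k))ᶜ)) := by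
    intro k
    apply (hucont _ (hpc _).1 (hjne _)).comp_continuous (by fun_prop)
    intro θ
    exact (hDj0.trans (hmono (Nat.le_add_right _ _))) (hcircD θ)
  have hlimcont : Continuous (fun θ : ℝ =>
      -Real.log (infDist (z + (((r:ℂ)) * Complex.exp ((θ:ℂ) * Complex.I)) • v)
        (⋃ j, Ω j)ᶜ)) := by
    apply (hucont _ hopen hne).comp_continuous (by fun_prop)
    intro θ
    exact hDsub (hcircD θ)
  have hanti_theta : ∀ θ : ℝ, Antitone (fun k =>
      -Real.log (infDist (z + (((r:ℂ)) * Complex.exp ((θ:ℂ) * Complex.I)) • v)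
        (Ω (j0+k))ᶜ)) := by
    intro θ i j hij
    have hxi : z + (((r:ℂ)) * Complex.exp ((θ:ℂ) * Complex.I)) • v ∈ Ω (j0+i) :=
      (hDj0.trans (hmono (Nat.le_add_right _ _))) (hcircD θ)
    have hposi := hpos' _ (hpc (j0+i)).1 (hjne _) _ hxi
    have hmono2 : infDist (z + (((r:ℂ)) * Complex.exp ((θ:ℂ) * Complex.I)) • v) (Ω (j0+i))ᶜ
        ≤ infDist (z + (((r:ℂ)) * Complex.exp ((θ:ℂ) * Complex.I)) • v) (Ω (j0+j))ᶜ :=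
      infDist_le_infDist_of_subset (compl_subset_compl.mpr (hmono (by omega))) (hjne _)
    exact neg_le_neg (Real.log_le_log hposi hmono2)
  have hIconv : Tendsto (fun k => ∫ θ in (0:ℝ)..(2*π),
      -Real.log (infDist (z + (((r:ℂ)) * Complex.exp ((θ:ℂ) * Complex.I)) • v)
        (Ω (j0+k))ᶜ)) atTop
      (𝓝 (∫ θ in (0:ℝ)..(2*π),
        -Real.log (infDist (z + (((r:ℂ)) * Complex.exp ((θ:ℂ) * Complex.I)) • v)
          (⋃ j, Ω j)ᶜ))) := by
    have key := MeasureTheory.integral_tendsto_of_tendsto_of_antitone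
      (μ := volume.restrict (Ioc (0:ℝ) (2*π)))
      (f := fun k (θ:ℝ) =>
        -Real.log (infDist (z + (((r:ℂ)) * Complex.exp ((θ:ℂ) * Complex.I)) • v)
          (Ω (j0+k))ᶜ))
      (F := fun (θ:ℝ) =>
        -Real.log (infDist (z + (((r:ℂ)) * Complex.exp ((θ:ℂ) * Complex.I)) • v)
          (⋃ j, Ω j)ᶜ))
      (fun k => (hcirccont k).integrableOn_Ioc)
      (hlimcont.integrableOn_Ioc)
      (ae_of_all _ (fun θ => hanti_theta θ))
      (ae_of_all _ (fun θ => hconv _ (hDsub (hcircD θ))))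
    simpa only [intervalIntegral.integral_of_le h2π.le] using key
  have hfinal := le_of_tendsto_of_tendsto' (hconv z hz)
    (hIconv.const_mul (1/(2*π))) stepA
  exact hfinal

end AuxLemmasForStatement11
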